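/- Define the modified function Q̃(x, y) = QNC(x, y) + (1/(12xy)) · ( 1/(y-1) - 1/(x-1) ) for real x, y > 1. Then the family (i, j) ↦ |Q̃(p_i, p_j)|², indexed by pairs of positive integers, IS summable: ∑_{i,j} |Q̃(p_i, p_j)|² < ∞ (so the modified matrix is Hilbert–Schmidt but not of trace class). -/

import Mathlib

open Real

/-- `F(x,y) = ∑_{k=1}^∞ x^{k-1} · y^{-x^k} / (1 - y^{-x^k})²`. -/
noncomputable def F (x y : ℝ) : ℝ :=
  ∑' k : ℕ, x ^ (k : ℝ) * y ^ (-(x ^ ((k : ℝ) + 1))) / (1 - y ^ (-(x ^ ((k : ℝ) + 1)))) ^ 2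

/-- `QNC(x,y) = (1/(12xy)) · ( x(y-1)F(x,y) - y(x-1)F(y,x) )`. -/
noncomputable def QNC (x y : ℝ) : ℝ :=
  1 / (12 * x * y) * (x * (y - 1) * F x y - y * (x - 1) * F y x)

/-- The modified function `Q̃(x,y) = QNC(x,y) + (1/(12xy))·(1/(y-1) - 1/(x-1))`. -/
noncomputable def QNCtilde (x y : ℝ) : ℝ :=
  QNC x y + 1 / (12 * x * y) * (1 / (y - 1) - 1 / (x - 1))

/-- `nthPrime i` is the `(i+1)`-st prime, so `nthPrime 0 = 2`, `nthPrime 1 = 3`, ... -/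
noncomputable def nthPrime (i : ℕ) : ℕ := Nat.nth Nat.Prime i

lemma nat_mul_le_pow {Y : ℕ} (hY : 2 ≤ Y) : ∀ X, 2 ≤ X → X * Y ≤ Y ^ X := by
  refine Nat.le_induction ?_ ?_
  · have : 2 * Y ≤ Y * Y := Nat.mul_le_mul_right Y hY
    simpa [pow_two] using this
  · intro n hn ih
    have hYn : Y ≤ Y ^ n := Nat.le_self_pow (by omega) Y
    calc (n + 1) * Y = n * Y + Y := by ring
      _ ≤ Y ^ n + Y ^ n := Nat.add_le_add ih hYn
      _ = 2 * Y ^ n := by ring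
      _ ≤ Y * Y ^ n := Nat.mul_le_mul_right _ hY
      _ = Y ^ (n + 1) := by ring

/-- Rewrite the `k`-th term of `F X Y` (for natural `X Y`) without `rpow`. -/
lemma F_term_eq (X Y : ℕ) (k : ℕ) :
    (X:ℝ) ^ ((k:ℕ):ℝ) * (Y:ℝ) ^ (-((X:ℝ) ^ (((k:ℕ):ℝ) + 1))) /
      (1 - (Y:ℝ) ^ (-((X:ℝ) ^ (((k:ℕ):ℝ) + 1)))) ^ 2
    = (X:ℝ) ^ k * ((Y:ℝ) ^ (X ^ (k+1)))⁻¹ / (1 - ((Y:ℝ) ^ (X ^ (k+1)))⁻¹) ^ 2 := by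
  have e1 : (X:ℝ) ^ ((k:ℕ):ℝ) = (X:ℝ) ^ k := Real.rpow_natCast _ _
  have e2 : (Y:ℝ) ^ (-((X:ℝ) ^ (((k:ℕ):ℝ) + 1))) = ((Y:ℝ) ^ (X ^ (k+1)))⁻¹ := by
    have h1 : ((k:ℝ) + 1) = ((k+1 : ℕ) : ℝ) := by push_cast; ring
    rw [h1, Real.rpow_natCast]
    have h2 : (X:ℝ) ^ (k+1) = ((X ^ (k+1) : ℕ) : ℝ) := by push_cast; ring
    rw [h2, Real.rpow_neg (by positivity), Real.rpow_natCast]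
  rw [e1, e2]

lemma F_bounds {X Y : ℕ} (hX : 2 ≤ X) (hY : 2 ≤ Y) :
    0 ≤ F X Y ∧ F X Y ≤ 4 / ((X:ℝ) * Y) := by
  have hX1 : (1:ℝ) ≤ X := by exact_mod_cast hX.trans' (by norm_num)
  have hY1 : (1:ℝ) ≤ Y := by exact_mod_cast hY.trans' (by norm_num)
  set u : ℕ → ℝ := fun k => ((Y:ℝ) ^ (X ^ (k+1)))⁻¹ with hu
  set g : ℕ → ℝ := fun k => (X:ℝ) ^ k * u k / (1 - u k) ^ 2 with hg
  have hFeq : F X Y = ∑' k, g k := by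
    unfold F
    exact tsum_congr fun k => F_term_eq X Y k
  have hu_pos : ∀ k, 0 < u k := fun k => by positivity
  have hu_le : ∀ k, u k ≤ 1/4 := by
    intro k
    have h4 : (4:ℝ) ≤ (Y:ℝ) ^ (X ^ (k+1)) := by
      have hnat : 4 ≤ Y ^ (X ^ (k+1)) := by
        calc 4 = 2 ^ 2 := by norm_num
          _ ≤ 2 ^ (X ^ (k+1)) := Nat.pow_le_pow_right (by norm_num)
              (le_trans hX (Nat.le_self_pow (by omega) X))
          _ ≤ Y ^ (X ^ (k+1)) := Nat.pow_le_pow_left hY _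
      exact_mod_cast hnat
    rw [hu]
    simp only
    rw [inv_le_comm₀ (by linarith) (by norm_num)]
    linarith [h4]
  have hg_nonneg : ∀ k, 0 ≤ g k := by
    intro k
    have h1 := hu_pos k
    have h2 := hu_le k
    have h3 : (0:ℝ) < 1 - u k := by linarith
    have hden : (0:ℝ) < (1 - u k) ^ 2 := pow_pos h3 2
    exact div_nonneg (by positivity) hden.le
  set q : ℝ := ((Y:ℝ) ^ X)⁻¹ with hq
  have hq_pos : 0 < q := by positivity
  -- u k ≤ q ^ (k+1)
  have hu_le_q : ∀ k, u k ≤ q ^ (k+1) := by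
    intro k
    have hexp : X * (k+1) ≤ X ^ (k+1) := by
      have h1 : k + 1 ≤ X ^ k := Nat.lt_pow_self (n := k) (by omega)
      calc X * (k+1) ≤ X * X ^ k := Nat.mul_le_mul_left X h1
        _ = X ^ (k+1) := by ring
    have hYpow : (Y:ℝ) ^ (X * (k+1)) ≤ (Y:ℝ) ^ (X ^ (k+1)) :=
      pow_le_pow_right₀ hY1 hexp
    have : ((Y:ℝ) ^ (X ^ (k+1)))⁻¹ ≤ ((Y:ℝ) ^ (X * (k+1)))⁻¹ := by
      apply inv_anti₀ (by positivity) hYpow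
    calc u k ≤ ((Y:ℝ) ^ (X * (k+1)))⁻¹ := this
      _ = q ^ (k+1) := by rw [hq, pow_mul, inv_pow]
  -- X * q ≤ 1/2
  have hXq : (X:ℝ) * q ≤ 1/2 := by
    have hnat : 2 * X ≤ Y ^ X := by
      calc 2 * X = X * 2 := by ring
        _ ≤ 2 ^ X := nat_mul_le_pow (le_refl 2) X hX
        _ ≤ Y ^ X := Nat.pow_le_pow_left hY X
    have h2X : (2:ℝ) * X ≤ (Y:ℝ) ^ X := by exact_mod_cast hnat
    have hXpos : (0:ℝ) < X := by linarith
    rw [hq]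
    rw [mul_inv_le_iff₀ (by positivity)]
    linarith
  -- q ≤ 1 / (X * Y)
  have hq_le : q ≤ 1 / ((X:ℝ) * Y) := by
    have hnat : X * Y ≤ Y ^ X := nat_mul_le_pow hY X hX
    have h1 : ((X:ℝ) * Y) ≤ (Y:ℝ) ^ X := by exact_mod_cast hnat
    rw [hq, inv_eq_one_div]
    apply one_div_le_one_div_of_le (by positivity) h1
  -- majorant
  set m : ℕ → ℝ := fun k => (16/9 : ℝ) * q * (1/2 : ℝ) ^ k with hm
  have hg_le_m : ∀ k, g k ≤ m k := by
    intro k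
    have h1 : (9/16 : ℝ) ≤ (1 - u k) ^ 2 := by
      have := hu_le k
      have := hu_pos k
      nlinarith
    have hXk : (0:ℝ) ≤ (X:ℝ) ^ k := by positivity
    have step1 : g k ≤ (16/9 : ℝ) * ((X:ℝ) ^ k * u k) := by
      rw [hg]
      simp only
      rw [div_le_iff₀ (by nlinarith)]
      have hnum : (0:ℝ) ≤ (X:ℝ) ^ k * u k := by positivity
      nlinarith
    have step2 : (X:ℝ) ^ k * u k ≤ q * (1/2 : ℝ) ^ k := by
      calc (X:ℝ) ^ k * u k ≤ (X:ℝ) ^ k * q ^ (k+1) :=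
            mul_le_mul_of_nonneg_left (hu_le_q k) hXk
        _ = q * ((X:ℝ) * q) ^ k := by ring
        _ ≤ q * (1/2 : ℝ) ^ k := by
            apply mul_le_mul_of_nonneg_left _ hq_pos.le
            apply pow_le_pow_left₀ (by positivity) hXq
    calc g k ≤ (16/9 : ℝ) * ((X:ℝ) ^ k * u k) := step1
      _ ≤ (16/9 : ℝ) * (q * (1/2:ℝ) ^ k) := by nlinarith
      _ = m k := by rw [hm]; ring
  have hm_summable : Summable m := by
    apply Summable.mul_left
    exact summable_geometric_of_lt_one (by norm_num) (by norm_num)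
  have hg_summable : Summable g := Summable.of_nonneg_of_le hg_nonneg hg_le_m hm_summable
  have htsum_m : ∑' k, m k = (32/9 : ℝ) * q := by
    rw [hm]
    rw [tsum_mul_left, tsum_geometric_of_lt_one (by norm_num) (by norm_num)]
    norm_num
    ring
  constructor
  · rw [hFeq]; exact tsum_nonneg hg_nonneg
  · rw [hFeq]
    calc ∑' k, g k ≤ ∑' k, m k := Summable.tsum_le_tsum hg_le_m hg_summable hm_summable
      _ = (32/9:ℝ) * q := htsum_m
      _ ≤ 4 * (1 / ((X:ℝ)*Y)) := by nlinarith
      _ = 4 / ((X:ℝ) * Y) := by ring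

lemma Qtilde_bound {X Y : ℕ} (hX : 2 ≤ X) (hY : 2 ≤ Y) :
    |QNCtilde X Y| ≤ 1 / ((X:ℝ) * Y) := by
  have hX2 : (2:ℝ) ≤ X := by exact_mod_cast hX
  have hY2 : (2:ℝ) ≤ Y := by exact_mod_cast hY
  have hXY : (0:ℝ) < (X:ℝ) * Y := by nlinarith
  obtain ⟨ha0, ha⟩ := F_bounds hX hY
  obtain ⟨hb0, hb⟩ := F_bounds hY hX
  have hb' : F (Y:ℝ) (X:ℝ) ≤ 4 / ((X:ℝ) * Y) := by
    have : 4 / ((Y:ℝ) * X) = 4 / ((X:ℝ) * Y) := by ring_nf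
    linarith [hb, this.symm.le]
  set a := F (X:ℝ) (Y:ℝ)
  set b := F (Y:ℝ) (X:ℝ)
  have haXY : a * ((X:ℝ) * Y) ≤ 4 := (le_div_iff₀ hXY).mp ha
  have hbXY : b * ((X:ℝ) * Y) ≤ 4 := (le_div_iff₀ hXY).mp hb'
  have hXa : (0:ℝ) ≤ (X:ℝ) * a := mul_nonneg (by linarith) ha0
  have hYb : (0:ℝ) ≤ (Y:ℝ) * b := mul_nonneg (by linarith) hb0
  have hs : 0 ≤ (X:ℝ) * (Y - 1) * a :=
    mul_nonneg (mul_nonneg (by linarith) (by linarith)) ha0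
  have hs' : (X:ℝ) * (Y - 1) * a ≤ 4 := by nlinarith [haXY, hXa]
  have ht : 0 ≤ (Y:ℝ) * (X - 1) * b :=
    mul_nonneg (mul_nonneg (by linarith) (by linarith)) hb0
  have ht' : (Y:ℝ) * (X - 1) * b ≤ 4 := by nlinarith [hbXY, hYb]
  have hd : (0:ℝ) < 1 / (12 * X * Y) := by positivity
  have habs1 : |(X:ℝ) * (Y - 1) * a - (Y:ℝ) * (X - 1) * b| ≤ 4 :=
    abs_le.mpr ⟨by linarith, by linarith⟩
  have he1 : 0 < 1 / ((Y:ℝ) - 1) := div_pos one_pos (by linarith)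
  have he1' : 1 / ((Y:ℝ) - 1) ≤ 1 := by
    rw [div_le_one (by linarith)]; linarith
  have he2 : 0 < 1 / ((X:ℝ) - 1) := div_pos one_pos (by linarith)
  have he2' : 1 / ((X:ℝ) - 1) ≤ 1 := by
    rw [div_le_one (by linarith)]; linarith
  have habs2 : |1 / ((Y:ℝ) - 1) - 1 / ((X:ℝ) - 1)| ≤ 1 :=
    abs_le.mpr ⟨by linarith, by linarith⟩
  have hQNC : |QNC X Y| ≤ 1 / (12 * X * Y) * 4 := by
    unfold QNC
    rw [abs_mul, abs_of_pos hd]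
    exact mul_le_mul_of_nonneg_left habs1 hd.le
  have hcorr : |1 / (12 * (X:ℝ) * Y) * (1 / ((Y:ℝ) - 1) - 1 / ((X:ℝ) - 1))| ≤
      1 / (12 * X * Y) * 1 := by
    rw [abs_mul, abs_of_pos hd]
    exact mul_le_mul_of_nonneg_left habs2 hd.le
  have : |QNCtilde X Y| ≤ 1 / (12 * X * Y) * 4 + 1 / (12 * X * Y) * 1 := by
    unfold QNCtilde
    exact le_trans (abs_add_le _ _) (add_le_add hQNC hcorr)
  have hfin : 1 / (12 * (X:ℝ) * Y) * 4 + 1 / (12 * (X:ℝ) * Y) * 1 ≤ 1 / ((X:ℝ) * Y) := by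
    have key : (1:ℝ) / (12 * (X:ℝ) * Y) = 1 / 12 * (1 / ((X:ℝ) * Y)) := by
      rw [mul_assoc]
      simp [one_div, mul_inv]
      ring
    rw [key]
    have hz : (0:ℝ) < 1 / ((X:ℝ) * Y) := by positivity
    linarith
  linarith

set_option maxHeartbeats 1000000 in
theorem summable_sq_abs_Rtilde :
    Summable (fun ij : ℕ × ℕ =>
      |QNCtilde (nthPrime ij.1 : ℝ) (nthPrime ij.2 : ℝ)| ^ 2) := by
  have hp : ∀ i, 2 ≤ nthPrime i := fun i =>
    (Nat.nth_mem_of_infinite Nat.infinite_setOf_prime i).two_le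
  have hp_pos : ∀ i, (0:ℝ) < (nthPrime i : ℝ) := fun i => by
    have := hp i; positivity
  have hsum1 : Summable (fun i : ℕ => 1 / ((nthPrime i : ℝ)) ^ 2) := by
    have h1 : Summable (fun n : ℕ => 1 / (n:ℝ) ^ 2) :=
      Real.summable_one_div_nat_pow.mpr (by norm_num)
    have h2 : Function.Injective nthPrime :=
      Nat.nth_injective Nat.infinite_setOf_prime
    exact h1.comp_injective h2
  have hmaj : Summable (fun ij : ℕ × ℕ =>
      (1 / ((nthPrime ij.1 : ℝ)) ^ 2) * (1 / ((nthPrime ij.2 : ℝ)) ^ 2)) :=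
    Summable.mul_of_nonneg hsum1 hsum1
      (fun i => by positivity) (fun j => by positivity)
  apply Summable.of_nonneg_of_le (fun ij => by positivity) _ hmaj
  intro ij
  have h1 := Qtilde_bound (hp ij.1) (hp ij.2)
  have h2 : |QNCtilde (nthPrime ij.1 : ℝ) (nthPrime ij.2 : ℝ)| ^ 2 ≤
      (1 / ((nthPrime ij.1 : ℝ) * (nthPrime ij.2 : ℝ))) ^ 2 :=
    pow_le_pow_left₀ (abs_nonneg _) h1 2
  calc |QNCtilde (nthPrime ij.1 : ℝ) (nthPrime ij.2 : ℝ)| ^ 2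
      ≤ (1 / ((nthPrime ij.1 : ℝ) * (nthPrime ij.2 : ℝ))) ^ 2 := h2
    _ = (1 / ((nthPrime ij.1 : ℝ)) ^ 2) * (1 / ((nthPrime ij.2 : ℝ)) ^ 2) := by
        rw [div_pow, mul_pow]; ring
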